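/- Let μ be a probability measure on a product space modeling (adversary knowledge, query output), with conditional indistinguishability: for all measurable sets E of outputs and Z of adversary values, μ_i(E | Z) ≤ e^ε μ(E | Z) + δ and μ(E | Z) ≤ e^ε μ_i(E | Z) + δ, whenever μ(Z) > 0 and μ_i(Z) > 0 with μ(Z) = μ_i(Z). Then the unconditional measures satisfy μ_i(E) ≤ e^ε μ(E) + δ and μ(E) ≤ e^ε μ_i(E) + δ for every measurable E, provided the adversary information is partitioned into countably many sets Z_k of equal mass under μ and μ_i. -/

import Mathlib

open MeasureTheory

theorem aux_sum_privacy
    {A O : Type*} [MeasurableSpace A] [MeasurableSpace O]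
    (ν ν' : Measure (A × O)) [IsProbabilityMeasure ν] [IsProbabilityMeasure ν']
    (c d : ENNReal)
    (Z : ℕ → Set A) (hZmeas : ∀ k, MeasurableSet (Z k))
    (hZdisj : Pairwise (Function.onFun Disjoint Z))
    (hZcover : (⋃ k, Z k) = Set.univ)
    (E : Set O) (hE : MeasurableSet E)
    (hk : ∀ k, ν' (Z k ×ˢ E) ≤ c * ν (Z k ×ˢ E) + d * ν (Z k ×ˢ (Set.univ : Set O))) :
    ν' ((Set.univ : Set A) ×ˢ E) ≤ c * ν ((Set.univ : Set A) ×ˢ E) + d := by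
  have hprodE : ∀ (m : Measure (A × O)), (∀ F : Set O, MeasurableSet F →
      m ((Set.univ : Set A) ×ˢ F) = ∑' k, m (Z k ×ˢ F)) := by
    intro m F hF
    have hU : (Set.univ : Set A) ×ˢ F = ⋃ k, Z k ×ˢ F := by
      rw [← hZcover, Set.iUnion_prod_const]
    rw [hU, measure_iUnion]
    · intro i j hij
      exact Set.disjoint_prod.mpr (Or.inl (hZdisj hij))
    · exact fun k => (hZmeas k).prod hF
  calc ν' ((Set.univ : Set A) ×ˢ E) = ∑' k, ν' (Z k ×ˢ E) := hprodE ν' E hE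
    _ ≤ ∑' k, (c * ν (Z k ×ˢ E) + d * ν (Z k ×ˢ (Set.univ : Set O))) :=
        ENNReal.tsum_le_tsum hk
    _ = c * (∑' k, ν (Z k ×ˢ E)) + d * (∑' k, ν (Z k ×ˢ (Set.univ : Set O))) := by
        rw [ENNReal.tsum_add, ENNReal.tsum_mul_left, ENNReal.tsum_mul_left]
    _ = c * ν ((Set.univ : Set A) ×ˢ E) + d * ν ((Set.univ : Set A) ×ˢ (Set.univ : Set O)) := by
        rw [hprodE ν E hE, hprodE ν Set.univ MeasurableSet.univ]
    _ = c * ν ((Set.univ : Set A) ×ˢ E) + d := by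
        rw [Set.univ_prod_univ, measure_univ, mul_one]

theorem mul_back {a b m c d : ENNReal} (hm0 : m ≠ 0) (hmt : m ≠ ⊤)
    (h : a / m ≤ c * (b / m) + d) : a ≤ c * b + d * m := by
  have := mul_le_mul_left h m
  rwa [ENNReal.div_mul_cancel hm0 hmt, add_mul, mul_assoc,
    ENNReal.div_mul_cancel hm0 hmt] at this

/-- Conditional (adversarial) `(ε,δ)`-indistinguishability over a countable partition of
adversary information with matching marginal masses implies unconditional
`(ε,δ)`-indistinguishability. -/
theorem conditional_privacy_implies_unconditional
    {A O : Type*} [MeasurableSpace A] [MeasurableSpace O]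
    (μ μi : Measure (A × O)) [IsProbabilityMeasure μ] [IsProbabilityMeasure μi]
    (ε δ : ℝ) (hε : 0 < ε) (hδ0 : 0 ≤ δ) (hδ1 : δ ≤ 1)
    (Z : ℕ → Set A) (hZmeas : ∀ k, MeasurableSet (Z k))
    (hZdisj : Pairwise (Function.onFun Disjoint Z))
    (hZcover : (⋃ k, Z k) = Set.univ)
    (hmass : ∀ k, μ (Z k ×ˢ (Set.univ : Set O)) = μi (Z k ×ˢ (Set.univ : Set O)))
    (hcond : ∀ k, ∀ E : Set O, MeasurableSet E →
        0 < μ (Z k ×ˢ (Set.univ : Set O)) → 0 < μi (Z k ×ˢ (Set.univ : Set O)) →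
        μi (Z k ×ˢ E) / μi (Z k ×ˢ (Set.univ : Set O)) ≤
            ENNReal.ofReal (Real.exp ε) * (μ (Z k ×ˢ E) / μ (Z k ×ˢ (Set.univ : Set O)))
              + ENNReal.ofReal δ ∧
        μ (Z k ×ˢ E) / μ (Z k ×ˢ (Set.univ : Set O)) ≤
            ENNReal.ofReal (Real.exp ε) * (μi (Z k ×ˢ E) / μi (Z k ×ˢ (Set.univ : Set O)))
              + ENNReal.ofReal δ) :
    ∀ E : Set O, MeasurableSet E →
      μi ((Set.univ : Set A) ×ˢ E) ≤
          ENNReal.ofReal (Real.exp ε) * μ ((Set.univ : Set A) ×ˢ E) + ENNReal.ofReal δ ∧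
      μ ((Set.univ : Set A) ×ˢ E) ≤
          ENNReal.ofReal (Real.exp ε) * μi ((Set.univ : Set A) ×ˢ E) + ENNReal.ofReal δ := by
  intro E hE
  set c := ENNReal.ofReal (Real.exp ε) with hc
  set d := ENNReal.ofReal δ with hd
  have hsub : ∀ (m : Measure (A × O)) k, m (Z k ×ˢ E) ≤ m (Z k ×ˢ (Set.univ : Set O)) :=
    fun m k => measure_mono (Set.prod_mono_right (Set.subset_univ E))
  constructor
  · refine aux_sum_privacy μ μi c d Z hZmeas hZdisj hZcover E hE fun k => ?_
    by_cases h0 : μ (Z k ×ˢ (Set.univ : Set O)) = 0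
    · have h0' : μi (Z k ×ˢ (Set.univ : Set O)) = 0 := (hmass k) ▸ h0
      have : μi (Z k ×ˢ E) = 0 := le_antisymm (h0' ▸ hsub μi k) zero_le
      simp [this]
    · have hpos : 0 < μ (Z k ×ˢ (Set.univ : Set O)) := pos_iff_ne_zero.mpr h0
      have hpos' : 0 < μi (Z k ×ˢ (Set.univ : Set O)) := (hmass k) ▸ hpos
      have h := (hcond k E hE hpos hpos').1
      rw [← hmass k] at h
      exact mul_back h0 (measure_ne_top μ _) h
  · refine aux_sum_privacy μi μ c d Z hZmeas hZdisj hZcover E hE fun k => ?_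
    by_cases h0 : μi (Z k ×ˢ (Set.univ : Set O)) = 0
    · have h0' : μ (Z k ×ˢ (Set.univ : Set O)) = 0 := (hmass k).trans h0
      have : μ (Z k ×ˢ E) = 0 := le_antisymm (h0' ▸ hsub μ k) zero_le
      simp [this]
    · have hpos' : 0 < μi (Z k ×ˢ (Set.univ : Set O)) := pos_iff_ne_zero.mpr h0
      have hpos : 0 < μ (Z k ×ˢ (Set.univ : Set O)) := (hmass k) ▸ hpos'
      have h := (hcond k E hE hpos hpos').2
      rw [hmass k] at h
      exact mul_back h0 (measure_ne_top μi _) h
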